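/- (Claim 2 / backward direction of Proposition 1.) For a given incentive profile u, if a feasible flow f is a Wardrop equilibrium (c_p(f,u) ≤ c_q(f,u) for all paths p, q with f_p > 0), then f minimizes the potential Φ(·,u) over the feasible set F. -/
import Mathlib


open Set MeasureTheory intervalIntegral

section RoutingGame

variable {E V P : Type*} [Fintype E] [Fintype V] [Fintype P] [Nonempty P]
  [DecidableEq E] [DecidableEq V]

/-- Edge flow: total flow of paths containing edge `e`. -/
noncomputable def edgeFlow (pathE : P → Finset E) (f : P → ℝ) (e : E) : ℝ :=
  ∑ p ∈ Finset.univ.filter (fun p => e ∈ pathE p), f p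

/-- Node flow: total flow of paths containing node `v`. -/
noncomputable def nodeFlow (pathV : P → Finset V) (f : P → ℝ) (v : V) : ℝ :=
  ∑ p ∈ Finset.univ.filter (fun p => v ∈ pathV p), f p

/-- Feasible flows: nonnegative, summing to one. -/
def Feasible (f : P → ℝ) : Prop := (∀ p, 0 ≤ f p) ∧ ∑ p, f p = 1

/-- Path cost with additive path-specific node incentives. -/
noncomputable def pathCost (pathE : P → Finset E) (pathV : P → Finset V)
    (ce : E → ℝ → ℝ) (cv : V → ℝ → ℝ) (u : V → P → ℝ) (f : P → ℝ) (p : P) : ℝ :=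
  (∑ e ∈ pathE p, ce e (edgeFlow pathE f e)) +
  (∑ v ∈ pathV p, (cv v (nodeFlow pathV f v) + u v p))

/-- Wardrop equilibrium: every used path has minimal cost. -/
def IsWardrop (pathE : P → Finset E) (pathV : P → Finset V)
    (ce : E → ℝ → ℝ) (cv : V → ℝ → ℝ) (u : V → P → ℝ) (f : P → ℝ) : Prop :=
  ∀ p q : P, 0 < f p →
    pathCost pathE pathV ce cv u f p ≤ pathCost pathE pathV ce cv u f q

/-- The potential function `Φ(f,u)`. -/
noncomputable def potential (pathE : P → Finset E) (pathV : P → Finset V)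
    (ce : E → ℝ → ℝ) (cv : V → ℝ → ℝ) (u : V → P → ℝ) (f : P → ℝ) : ℝ :=
  (∑ e, ∫ s in (0:ℝ)..(edgeFlow pathE f e), ce e s) +
  (∑ v, ∫ s in (0:ℝ)..(nodeFlow pathV f v), cv v s) +
  (∑ p, f p * ∑ v ∈ pathV p, u v p)

/-- Social cost. -/
noncomputable def socialCost (pathE : P → Finset E) (pathV : P → Finset V)
    (ce : E → ℝ → ℝ) (cv : V → ℝ → ℝ) (u : V → P → ℝ) (f : P → ℝ) : ℝ :=
  ∑ p, f p * pathCost pathE pathV ce cv u f p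

lemma integral_lb_aux (c : ℝ → ℝ) (hcont : ContinuousOn c (Set.Icc (0:ℝ) 1))
    (hmono : MonotoneOn c (Set.Icc (0:ℝ) 1))
    {a b : ℝ} (ha : a ∈ Set.Icc (0:ℝ) 1) (hb : b ∈ Set.Icc (0:ℝ) 1) :
    c a * (b - a) ≤ ∫ s in a..b, c s := by
  have hsub : Set.uIcc a b ⊆ Set.Icc (0:ℝ) 1 := Set.uIcc_subset_Icc ha hb
  have hint : IntervalIntegrable c volume a b :=
    (hcont.mono hsub).intervalIntegrable
  rcases le_total a b with h | h
  · have : ∫ s in a..b, c a ≤ ∫ s in a..b, c s := by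
      apply intervalIntegral.integral_mono_on h intervalIntegrable_const hint
      intro x hx
      exact hmono ha (hsub (by rw [Set.uIcc_of_le h]; exact hx)) hx.1
    simpa [mul_comm] using this
  · have h1 : ∫ s in b..a, c s ≤ ∫ s in b..a, c a := by
      apply intervalIntegral.integral_mono_on h hint.symm intervalIntegrable_const
      intro x hx
      exact hmono (hsub (by rw [Set.uIcc_of_ge h]; exact hx)) ha hx.2
    rw [intervalIntegral.integral_symm b a]
    have h2 : (∫ s in b..a, c a) = c a * (a - b) := by simp [mul_comm]
    nlinarith [h1]

lemma sum_subset_mem_Icc {f : P → ℝ} (hf : Feasible f) (S : Finset P) :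
    (∑ p ∈ S, f p) ∈ Set.Icc (0:ℝ) 1 := by
  constructor
  · exact Finset.sum_nonneg fun p _ => hf.1 p
  · rw [← hf.2]
    exact Finset.sum_le_sum_of_subset_of_nonneg (Finset.subset_univ S)
      (fun p _ _ => hf.1 p)

/-- **Claim 2; backward direction of Proposition 1.** If a feasible flow is
a Wardrop equilibrium, then it minimizes the potential `Φ(·,u)` over the feasible set. -/
theorem isWardrop_minimizes_potential
    (pathE : P → Finset E) (pathV : P → Finset V)
    (ce : E → ℝ → ℝ) (cv : V → ℝ → ℝ) (u : V → P → ℝ)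
    (hce_nn : ∀ e, ∀ x ∈ Set.Icc (0:ℝ) 1, 0 ≤ ce e x)
    (hce_cont : ∀ e, ContinuousOn (ce e) (Set.Icc (0:ℝ) 1))
    (hce_mono : ∀ e, MonotoneOn (ce e) (Set.Icc (0:ℝ) 1))
    (hcv_nn : ∀ v, ∀ x ∈ Set.Icc (0:ℝ) 1, 0 ≤ cv v x)
    (hcv_cont : ∀ v, ContinuousOn (cv v) (Set.Icc (0:ℝ) 1))
    (hcv_mono : ∀ v, MonotoneOn (cv v) (Set.Icc (0:ℝ) 1))
    (f : P → ℝ) (hf : Feasible f)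
    (heq : IsWardrop pathE pathV ce cv u f) :
    ∀ g : P → ℝ, Feasible g →
      potential pathE pathV ce cv u f ≤ potential pathE pathV ce cv u g := by
  intro g hg
  set C : P → ℝ := pathCost pathE pathV ce cv u f with hC
  -- flow membership facts
  have hfe : ∀ e, edgeFlow pathE f e ∈ Set.Icc (0:ℝ) 1 := fun e => sum_subset_mem_Icc hf _
  have hge : ∀ e, edgeFlow pathE g e ∈ Set.Icc (0:ℝ) 1 := fun e => sum_subset_mem_Icc hg _
  have hfv : ∀ v, nodeFlow pathV f v ∈ Set.Icc (0:ℝ) 1 := fun v => sum_subset_mem_Icc hf _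
  have hgv : ∀ v, nodeFlow pathV g v ∈ Set.Icc (0:ℝ) 1 := fun v => sum_subset_mem_Icc hg _
  have h0 : (0:ℝ) ∈ Set.Icc (0:ℝ) 1 := ⟨le_refl _, zero_le_one⟩
  -- integrability helper
  have hintE : ∀ e, ∀ a ∈ Set.Icc (0:ℝ) 1, ∀ b ∈ Set.Icc (0:ℝ) 1,
      IntervalIntegrable (ce e) volume a b := fun e a ha b hb =>
    ((hce_cont e).mono (Set.uIcc_subset_Icc ha hb)).intervalIntegrable
  have hintV : ∀ v, ∀ a ∈ Set.Icc (0:ℝ) 1, ∀ b ∈ Set.Icc (0:ℝ) 1,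
      IntervalIntegrable (cv v) volume a b := fun v a ha b hb =>
    ((hcv_cont v).mono (Set.uIcc_subset_Icc ha hb)).intervalIntegrable
  -- difference of potentials
  have hdiff : potential pathE pathV ce cv u g - potential pathE pathV ce cv u f =
      (∑ e, ∫ s in (edgeFlow pathE f e)..(edgeFlow pathE g e), ce e s) +
      (∑ v, ∫ s in (nodeFlow pathV f v)..(nodeFlow pathV g v), cv v s) +
      (∑ p, (g p - f p) * ∑ v ∈ pathV p, u v p) := by
    unfold potential
    have e1 : ∀ e, (∫ s in (0:ℝ)..(edgeFlow pathE g e), ce e s) -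
        (∫ s in (0:ℝ)..(edgeFlow pathE f e), ce e s) =
        ∫ s in (edgeFlow pathE f e)..(edgeFlow pathE g e), ce e s := fun e => by
      rw [← intervalIntegral.integral_add_adjacent_intervals
        (hintE e 0 h0 _ (hfe e)) (hintE e _ (hfe e) _ (hge e))]
      ring
    have e2 : ∀ v, (∫ s in (0:ℝ)..(nodeFlow pathV g v), cv v s) -
        (∫ s in (0:ℝ)..(nodeFlow pathV f v), cv v s) =
        ∫ s in (nodeFlow pathV f v)..(nodeFlow pathV g v), cv v s := fun v => by
      rw [← intervalIntegral.integral_add_adjacent_intervals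
        (hintV v 0 h0 _ (hfv v)) (hintV v _ (hfv v) _ (hgv v))]
      ring
    have E1 : (∑ e, ∫ s in (edgeFlow pathE f e)..(edgeFlow pathE g e), ce e s) =
        (∑ e, ∫ s in (0:ℝ)..(edgeFlow pathE g e), ce e s) -
        (∑ e, ∫ s in (0:ℝ)..(edgeFlow pathE f e), ce e s) := by
      rw [← Finset.sum_sub_distrib]
      exact Finset.sum_congr rfl fun e _ => (e1 e).symm
    have E2 : (∑ v, ∫ s in (nodeFlow pathV f v)..(nodeFlow pathV g v), cv v s) =
        (∑ v, ∫ s in (0:ℝ)..(nodeFlow pathV g v), cv v s) -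
        (∑ v, ∫ s in (0:ℝ)..(nodeFlow pathV f v), cv v s) := by
      rw [← Finset.sum_sub_distrib]
      exact Finset.sum_congr rfl fun v _ => (e2 v).symm
    have E3 : (∑ p, (g p - f p) * ∑ v ∈ pathV p, u v p) =
        (∑ p, g p * ∑ v ∈ pathV p, u v p) - (∑ p, f p * ∑ v ∈ pathV p, u v p) := by
      rw [← Finset.sum_sub_distrib]
      exact Finset.sum_congr rfl fun p _ => by ring
    rw [E1, E2, E3]
    ring
  -- lower bound via first-order terms
  have hlbE : ∀ e, ce e (edgeFlow pathE f e) * (edgeFlow pathE g e - edgeFlow pathE f e)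
      ≤ ∫ s in (edgeFlow pathE f e)..(edgeFlow pathE g e), ce e s := fun e =>
    integral_lb_aux (ce e) (hce_cont e) (hce_mono e) (hfe e) (hge e)
  have hlbV : ∀ v, cv v (nodeFlow pathV f v) * (nodeFlow pathV g v - nodeFlow pathV f v)
      ≤ ∫ s in (nodeFlow pathV f v)..(nodeFlow pathV g v), cv v s := fun v =>
    integral_lb_aux (cv v) (hcv_cont v) (hcv_mono v) (hfv v) (hgv v)
  -- swap sums identity
  have swapE : ∀ (w : E → ℝ),
      (∑ e, w e * (∑ p ∈ Finset.univ.filter (fun p => e ∈ pathE p), (g p - f p))) =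
      ∑ p, (g p - f p) * ∑ e ∈ pathE p, w e := by
    intro w
    simp_rw [Finset.mul_sum, Finset.sum_filter]
    rw [Finset.sum_comm]
    congr 1
    ext p
    rw [← Finset.sum_filter]
    have : Finset.univ.filter (fun e => e ∈ pathE p) = pathE p := by
      ext e; simp
    rw [this, ← Finset.sum_mul, mul_comm]
    exact Finset.mul_sum _ _ _
  have swapV : ∀ (w : V → ℝ),
      (∑ v, w v * (∑ p ∈ Finset.univ.filter (fun p => v ∈ pathV p), (g p - f p))) =
      ∑ p, (g p - f p) * ∑ v ∈ pathV p, w v := by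
    intro w
    simp_rw [Finset.mul_sum, Finset.sum_filter]
    rw [Finset.sum_comm]
    congr 1
    ext p
    rw [← Finset.sum_filter]
    have : Finset.univ.filter (fun v => v ∈ pathV p) = pathV p := by
      ext v; simp
    rw [this, ← Finset.sum_mul, mul_comm]
    exact Finset.mul_sum _ _ _
  -- the directional derivative equals sum of (g - f) * pathCost
  have hkey : (∑ e, ce e (edgeFlow pathE f e) * (edgeFlow pathE g e - edgeFlow pathE f e)) +
      (∑ v, cv v (nodeFlow pathV f v) * (nodeFlow pathV g v - nodeFlow pathV f v)) +
      (∑ p, (g p - f p) * ∑ v ∈ pathV p, u v p) =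
      ∑ p, (g p - f p) * C p := by
    have hE : ∀ e, edgeFlow pathE g e - edgeFlow pathE f e =
        ∑ p ∈ Finset.univ.filter (fun p => e ∈ pathE p), (g p - f p) := fun e => by
      rw [Finset.sum_sub_distrib]; rfl
    have hV : ∀ v, nodeFlow pathV g v - nodeFlow pathV f v =
        ∑ p ∈ Finset.univ.filter (fun p => v ∈ pathV p), (g p - f p) := fun v => by
      rw [Finset.sum_sub_distrib]; rfl
    simp_rw [hE, hV]
    rw [swapE (fun e => ce e (edgeFlow pathE f e)),
        swapV (fun v => cv v (nodeFlow pathV f v))]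
    rw [← Finset.sum_add_distrib, ← Finset.sum_add_distrib]
    apply Finset.sum_congr rfl
    intro p _
    simp only [hC, pathCost, Finset.sum_add_distrib]
    ring
  -- Wardrop implies the linearized term is nonnegative
  have hnn : 0 ≤ ∑ p, (g p - f p) * C p := by
    obtain ⟨q0, _, hq0⟩ := Finset.exists_min_image Finset.univ C ⟨Classical.arbitrary P,
      Finset.mem_univ _⟩
    have hfL : ∑ p, f p * C p = C q0 := by
      have : ∀ p ∈ Finset.univ, f p * C p = f p * C q0 := by
        intro p _
        rcases eq_or_lt_of_le (hf.1 p) with h | h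
        · rw [← h]; ring
        · have hpq : C p = C q0 := le_antisymm (heq p q0 h) (hq0 p (Finset.mem_univ p))
          rw [hpq]
      rw [Finset.sum_congr rfl this, ← Finset.sum_mul, hf.2, one_mul]
    have hgL : C q0 ≤ ∑ p, g p * C p := by
      calc C q0 = ∑ p, g p * C q0 := by rw [← Finset.sum_mul, hg.2, one_mul]
        _ ≤ ∑ p, g p * C p := Finset.sum_le_sum fun p _ =>
            mul_le_mul_of_nonneg_left (hq0 p (Finset.mem_univ p)) (hg.1 p)
    have : ∑ p, (g p - f p) * C p = (∑ p, g p * C p) - ∑ p, f p * C p := by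
      rw [← Finset.sum_sub_distrib]; congr 1; ext p; ring
    rw [this, hfL]
    linarith
  -- conclude
  have h1 : 0 ≤ potential pathE pathV ce cv u g - potential pathE pathV ce cv u f := by
    rw [hdiff]
    calc (0:ℝ) ≤ ∑ p, (g p - f p) * C p := hnn
      _ = _ := hkey.symm
      _ ≤ _ := add_le_add (add_le_add (Finset.sum_le_sum fun e _ => hlbE e)
          (Finset.sum_le_sum fun v _ => hlbV v)) le_rfl
  linarith


end RoutingGame
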